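/- Let f(x) = a_0 x^n + ... + a_n be a real polynomial of degree n and let 2 ≤ M ≤ n. If all the leading coefficients h_0, h_1, ..., h_n of the polynomials f_0, ..., f_n produced by the generalized Euclidean algorithm with step M are positive, then all n special minors Δ_p, p = 1, ..., n, of the generalized Hurwitz matrix H_M(f) are strictly positive, and H_M(f) is totally nonnegative. -/

import Mathlib

open Polynomial

/-- The arithmetic part `f_j` of the polynomial with coefficients `a_0,...,a_n`:
`f_j(x) = Σ_{0 ≤ l ≤ n, l ≡ j (mod M)} a_l x^(n-l)`. -/
noncomputable def geaInit (a : ℕ → ℝ) (n M j : ℕ) : Polynomial ℝ :=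
  ∑ l ∈ Finset.range (n + 1), if l % M = j then C (a l) * X ^ (n - l) else 0

/-- The polynomials `f_0, f_1, ..., f_n` of the generalized Euclidean algorithm with step `M`:
`f_i = d_i f_{i+1} + f_{i+M}` where `d_i = f_i / f_{i+1}` and `f_{i+M} = f_i % f_{i+1}`
(Euclidean division of polynomials). -/
noncomputable def gea (a : ℕ → ℝ) (n M : ℕ) : ℕ → Polynomial ℝ
  | i =>
    if _h : i < M then geaInit a n M i
    else if _h2 : 2 ≤ M then
      gea a n M (i - M) % gea a n M (i - M + 1)
    else 0
  termination_by i => i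
  decreasing_by all_goals omega

/-- Entry `(i,j)` (0-based) of the generalized Hurwitz matrix `H_M(f) = (a_{Mj-i})_{i,j≥1}`,
with `a_k := 0` for `k < 0` and `k > n`. -/
def hEntry (a : ℕ → ℝ) (n M : ℕ) (i j : ℕ) : ℝ :=
  if i + 1 ≤ M * (j + 1) ∧ M * (j + 1) - (i + 1) ≤ n then a (M * (j + 1) - (i + 1)) else 0

/-- Total nonnegativity of an infinite matrix: every minor is nonnegative. -/
def IsTotallyNonneg (A : ℕ → ℕ → ℝ) : Prop :=
  ∀ (p : ℕ) (r c : Fin p → ℕ), StrictMono r → StrictMono c →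
    0 ≤ Matrix.det (Matrix.of fun s t : Fin p => A (r s) (c t))

/-- The special minor `H_M(k,r)` on rows `k, k+1, ..., k+r-1` and columns `1, ..., r`
(1-based indexing). -/
noncomputable def specialMinor (a : ℕ → ℝ) (n M k r : ℕ) : ℝ :=
  Matrix.det (Matrix.of fun s t : Fin r => hEntry a n M (k - 1 + s) t)

namespace HW

lemma gea_lt {a n M i} (h : i < M) : gea a n M i = geaInit a n M i := by
  rw [gea]; simp [h]

lemma gea_ge {a n M i} (h2 : 2 ≤ M) (h : M ≤ i) :
    gea a n M i = gea a n M (i - M) % gea a n M (i - M + 1) := by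
  rw [gea]; simp [h2, Nat.not_lt.2 h]

lemma geaInit_coeff (a : ℕ → ℝ) (n M j e : ℕ) :
    (geaInit a n M j).coeff e = if e ≤ n ∧ (n - e) % M = j then a (n - e) else 0 := by
  unfold geaInit
  rw [finset_sum_coeff, Finset.sum_eq_single (n - e)]
  · by_cases he : e ≤ n
    · by_cases hj : (n - e) % M = j
      · rw [if_pos hj, if_pos ⟨he, hj⟩, coeff_C_mul, coeff_X_pow, if_pos (by omega), mul_one]
      · rw [if_neg hj, if_neg (by tauto), coeff_zero]
    · conv_rhs => rw [if_neg (fun hc => he hc.1)]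
      split_ifs with hj
      · rw [coeff_C_mul, coeff_X_pow, if_neg (by omega), mul_zero]
      · rw [coeff_zero]
  · intro l hl hne
    simp only [Finset.mem_range] at hl
    split_ifs with hj
    · rw [coeff_C_mul, coeff_X_pow, if_neg (by omega), mul_zero]
    · rw [coeff_zero]
  · intro h
    exact absurd (Finset.mem_range.2 (by omega)) h

/-- homogeneity class: all exponents `e` of `p` satisfy `e + c ≡ n (mod M)`. -/
def Cls (M c n : ℕ) (p : ℝ[X]) : Prop := ∀ e, p.coeff e ≠ 0 → (e + c) % M = n % M

lemma cls_geaInit (a : ℕ → ℝ) (n M j : ℕ) : Cls M j n (geaInit a n M j) := by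
  intro e h
  rw [geaInit_coeff] at h
  by_cases hc : e ≤ n ∧ (n - e) % M = j
  · obtain ⟨h1, h2⟩ := hc
    have h3 : e + (n - e) % M ≡ e + (n - e) [MOD M] := Nat.ModEq.add_left e (Nat.mod_modEq _ _)
    have h4 : e + (n - e) = n := by omega
    rw [h2, h4] at h3
    exact h3
  · simp [hc] at h

lemma cls_shift {M c n : ℕ} {p : ℝ[X]} (h : Cls M c n p) : Cls M (c + M) n p := by
  intro e he
  rw [← Nat.add_assoc, Nat.add_mod_right]
  exact h e he

noncomputable def proj (M c n : ℕ) (p : ℝ[X]) : ℝ[X] :=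
  ∑ e ∈ p.support, if (e + c) % M = n % M then Polynomial.monomial e (p.coeff e) else 0

lemma proj_coeff (M c n : ℕ) (p : ℝ[X]) (e : ℕ) :
    (proj M c n p).coeff e = if (e + c) % M = n % M then p.coeff e else 0 := by
  unfold proj
  rw [finset_sum_coeff, Finset.sum_eq_single e]
  · split_ifs with hc
    · rw [coeff_monomial, if_pos rfl]
    · rw [coeff_zero]
  · intro l hl hne
    split_ifs with hc
    · rw [coeff_monomial, if_neg hne]
    · rw [coeff_zero]
  · intro he
    rw [Polynomial.notMem_support_iff] at he
    split_ifs with hc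
    · rw [coeff_monomial, if_pos rfl, he]
    · rw [coeff_zero]

lemma proj_eq_self {M c n : ℕ} {p : ℝ[X]} (h : Cls M c n p) : proj M c n p = p := by
  ext e
  rw [proj_coeff]
  split_ifs with hc
  · rfl
  · by_contra hne
    exact hc (h e fun h0 => hne h0.symm)

lemma cls_proj (M c n : ℕ) (p : ℝ[X]) : Cls M c n (proj M c n p) := by
  intro e he
  rw [proj_coeff] at he
  by_cases hc : (e + c) % M = n % M
  · exact hc
  · simp [hc] at he

lemma proj_add (M c n : ℕ) (p q : ℝ[X]) :
    proj M c n (p + q) = proj M c n p + proj M c n q := by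
  ext e
  simp only [proj_coeff, coeff_add]
  split_ifs <;> simp

lemma proj_eq_zero {M c n : ℕ} {p : ℝ[X]} (h : ∀ e, (e + c) % M = n % M → p.coeff e = 0) :
    proj M c n p = 0 := by
  ext e
  rw [proj_coeff, coeff_zero]
  split_ifs with hc
  · exact h e hc
  · rfl

lemma proj_degree_le (M c n : ℕ) (p : ℝ[X]) : (proj M c n p).degree ≤ p.degree := by
  unfold proj
  refine le_trans (Polynomial.degree_sum_le _ _) (Finset.sup_le fun e he => ?_)
  split_ifs with hc
  · exact le_trans (degree_monomial_le _ _) (le_degree_of_ne_zero (mem_support_iff.mp he))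
  · simp

end HW


namespace HW2
open HW

lemma mod_unique (p g q r : ℝ[X]) (hgne : g ≠ 0) (h : p = g * q + r)
    (hd : r.degree < g.degree) : p % g = r := by
  have h2 : g * (p / g) + p % g = p := EuclideanDomain.div_add_mod p g
  have hd2 : (p % g).degree < g.degree := EuclideanDomain.mod_lt _ hgne
  have key : g * (p / g - q) = r - p % g := by linear_combination h2 + h
  by_cases hqq : p / g - q = 0
  · rw [hqq, mul_zero] at key
    exact (sub_eq_zero.mp key.symm).symm
  · exfalso
    have h3 : g.degree ≤ (g * (p / g - q)).degree := degree_le_mul_left g hqq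
    rw [key] at h3
    have h4 : (r - p % g).degree < g.degree :=
      lt_of_le_of_lt (degree_sub_le _ _) (max_lt hd hd2)
    exact absurd (lt_of_le_of_lt h3 h4) (lt_irrefl _)

lemma dvd_of_mod_one {M k : ℕ} (hM : 2 ≤ M) (hk : k % M = 1 % M) : M ∣ k - 1 := by
  have h1 : 1 % M = 1 := Nat.mod_eq_of_lt (by omega)
  have := Nat.div_add_mod k M
  rw [hk, h1] at this
  exact ⟨k / M, by omega⟩

lemma proj_mul {M c n : ℕ} (hM : 2 ≤ M) (g : ℝ[X]) (hg : Cls M (c + 1) n g) (u : ℝ[X]) :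
    proj M c n (u * g) = proj M 0 1 u * g := by
  induction u using Polynomial.induction_on' with
  | add p q hp hq => rw [add_mul, proj_add, proj_add, hp, hq, add_mul]
  | monomial k x =>
    have hco : ∀ e, ((monomial k x) * g).coeff e
        = if k ≤ e then x * g.coeff (e - k) else 0 := by
      intro e
      rw [← C_mul_X_pow_eq_monomial, mul_comm (C x) (X ^ k), mul_assoc, coeff_X_pow_mul']
      split_ifs with h
      · rw [coeff_C_mul]
      · rfl
    by_cases hk : k % M = 1 % M
    · have hcls : Cls M c n ((monomial k x) * g) := by
        intro e he
        rw [hco] at he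
        by_cases hke : k ≤ e
        · rw [if_pos hke] at he
          have hge : g.coeff (e - k) ≠ 0 := by
            intro h0; rw [h0, mul_zero] at he; exact he rfl
          have h1 := hg _ hge
          obtain ⟨d, hd⟩ := dvd_of_mod_one hM hk
          have h1M : 1 % M = 1 := Nat.mod_eq_of_lt (by omega)
          have hk1 : 1 ≤ k := by have := Nat.mod_le k M; omega
          have he2 : e + c = (e - k + (c + 1)) + M * d := by omega
          rw [he2, Nat.add_mul_mod_self_left, h1]
        · rw [if_neg hke] at he; exact absurd rfl he
      rw [proj_eq_self hcls]
      have hm : Cls M 0 1 ((monomial k x : ℝ[X])) := by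
        intro e he
        rw [coeff_monomial] at he
        obtain rfl : k = e := by by_contra h0; rw [if_neg h0] at he; exact he rfl
        rw [Nat.add_zero, hk]
      rw [proj_eq_self hm]
    · have h1 : proj M c n ((monomial k x) * g) = 0 := by
        apply proj_eq_zero
        intro e hce
        rw [hco]
        split_ifs with hke
        · by_cases hgz : g.coeff (e - k) = 0
          · rw [hgz, mul_zero]
          · exfalso
            apply hk
            have hA : e - k + (c + 1) ≡ n [MOD M] := hg _ hgz
            have hB : e + c ≡ n [MOD M] := hce
            have hsplit : e + c + 1 = e - k + (c + 1) + k := by omega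
            have h3 : e + c + 1 ≡ n + k [MOD M] := by
              rw [hsplit]; exact hA.add_right k
            have h4 : e + c + 1 ≡ n + 1 [MOD M] := hB.add_right 1
            have h5 : n + k ≡ n + 1 [MOD M] := h3.symm.trans h4
            exact Nat.ModEq.add_left_cancel' n h5
        · rfl
      rw [h1]
      have h2 : proj M 0 1 ((monomial k x : ℝ[X])) = 0 := by
        apply proj_eq_zero
        intro e hce
        rw [coeff_monomial]
        split_ifs with h0
        · exfalso; apply hk; rw [h0]; simpa using hce
        · rfl
      rw [h2, zero_mul]

lemma cls_mod {M c n : ℕ} (hM : 2 ≤ M) (p g : ℝ[X]) (hgne : g ≠ 0)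
    (hp : Cls M c n p) (hg : Cls M (c + 1) n g) : Cls M c n (p % g) := by
  have h2 : g * (p / g) + p % g = p := EuclideanDomain.div_add_mod p g
  have hd2 : (p % g).degree < g.degree := EuclideanDomain.mod_lt _ hgne
  have hproj : p = g * (proj M 0 1 (p / g)) + proj M c n (p % g) := by
    conv_lhs => rw [← proj_eq_self hp, ← h2]
    rw [proj_add, mul_comm g (p / g), proj_mul hM g hg, mul_comm]
  have hdp : (proj M c n (p % g)).degree < g.degree :=
    lt_of_le_of_lt (proj_degree_le _ _ _ _) hd2
  have := mod_unique p g _ _ hgne hproj hdp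
  rw [this]
  exact cls_proj _ _ _ _
end HW2


namespace HW3
open HW HW2

variable {a : ℕ → ℝ} {n M : ℕ}

lemma gea_ne (hpos : ∀ i ≤ n, 0 < (gea a n M i).leadingCoeff) {i : ℕ} (hin : i ≤ n) :
    gea a n M i ≠ 0 :=
  leadingCoeff_ne_zero.mp (ne_of_gt (hpos i hin))

lemma gea_cls (hM : 2 ≤ M) (hpos : ∀ i ≤ n, 0 < (gea a n M i).leadingCoeff) :
    ∀ i, i ≤ n → Cls M i n (gea a n M i) := by
  intro i
  induction i using Nat.strong_induction_on with
  | _ i IH =>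
    intro hin
    by_cases h : i < M
    · rw [gea_lt h]; exact cls_geaInit a n M i
    · push_neg at h
      rw [gea_ge hM h]
      have hg : gea a n M (i - M + 1) ≠ 0 := gea_ne hpos (by omega)
      have c1 := IH (i - M) (by omega) (by omega)
      have c2 := IH (i - M + 1) (by omega) (by omega)
      have hcm := cls_mod hM _ _ hg c1 c2
      have := cls_shift hcm
      rwa [Nat.sub_add_cancel h] at this

lemma gea_res (hM : 2 ≤ M) (hpos : ∀ i ≤ n, 0 < (gea a n M i).leadingCoeff)
    {i : ℕ} (hin : i ≤ n) : ((gea a n M i).natDegree + i) % M = n % M := by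
  apply gea_cls hM hpos i hin
  rw [← leadingCoeff]
  exact ne_of_gt (hpos i hin)

lemma gea_res' (hM : 2 ≤ M) (hpos : ∀ i ≤ n, 0 < (gea a n M i).leadingCoeff)
    {i : ℕ} (hin : i ≤ n) : (gea a n M i).natDegree ≡ (n - i) [MOD M] := by
  have h1 := gea_res hM hpos hin
  have h2 : ((n - i) + i) % M = n % M := by rw [Nat.sub_add_cancel hin]
  exact Nat.ModEq.add_right_cancel' i (h1.trans h2.symm)

lemma deg_le (hM : 2 ≤ M) (hpos : ∀ i ≤ n, 0 < (gea a n M i).leadingCoeff) :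
    ∀ i, i ≤ n → (gea a n M i).natDegree ≤ n - i := by
  intro i
  induction i using Nat.strong_induction_on with
  | _ i IH =>
    intro hin
    by_cases h : i < M
    · rw [gea_lt h]
      apply Polynomial.natDegree_le_iff_coeff_eq_zero.mpr
      intro N hN
      rw [geaInit_coeff]
      split_ifs with hc
      · exfalso
        obtain ⟨h1, h2⟩ := hc
        have h3 : n - N < i := by omega
        rw [Nat.mod_eq_of_lt (lt_trans h3 h)] at h2
        omega
      · rfl
    · push_neg at h
      have hgne : gea a n M (i - M + 1) ≠ 0 := gea_ne hpos (by omega)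
      have hne : gea a n M i ≠ 0 := gea_ne hpos hin
      have hd : (gea a n M i).degree < (gea a n M (i - M + 1)).degree := by
        rw [gea_ge hM h]; exact EuclideanDomain.mod_lt _ hgne
      have hlt : (gea a n M i).natDegree < (gea a n M (i - M + 1)).natDegree :=
        natDegree_lt_natDegree hne hd
      have hub := IH (i - M + 1) (by omega) (by omega)
      have hres := gea_res' hM hpos hin
      by_contra hgt
      push_neg at hgt
      have hdvd : M ∣ (gea a n M i).natDegree - (n - i) :=
        (Nat.modEq_iff_dvd' (le_of_lt hgt)).mp hres.symm
      have := Nat.le_of_dvd (by omega) hdvd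
      omega

lemma deg0 (hM : 2 ≤ M) (ha0 : a 0 ≠ 0)
    (hpos : ∀ i ≤ n, 0 < (gea a n M i).leadingCoeff) :
    (gea a n M 0).natDegree = n := by
  have h0 : (gea a n M 0).coeff n = a 0 := by
    rw [gea_lt (by omega), geaInit_coeff, if_pos ⟨le_refl n, by simp⟩, Nat.sub_self]
  have h1 := deg_le hM hpos 0 (Nat.zero_le n)
  have h2 : n ≤ (gea a n M 0).natDegree := le_natDegree_of_ne_zero (h0 ▸ ha0)
  omega

lemma deg_exact (hM : 2 ≤ M) (hpos : ∀ i ≤ n, 0 < (gea a n M i).leadingCoeff) :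
    ∀ k i, 1 ≤ i → i ≤ n → n - i = k → (gea a n M i).natDegree = n - i := by
  intro k
  induction k using Nat.strong_induction_on with
  | _ k IH =>
    intro i h1 hin hk
    have hub := deg_le hM hpos i hin
    have hres := gea_res' hM hpos hin
    by_cases htop : n - i < M - 1
    · have h2 : (gea a n M i).natDegree % M = (n - i) % M := hres
      rwa [Nat.mod_eq_of_lt (by omega), Nat.mod_eq_of_lt (by omega)] at h2
    · push_neg at htop
      have hj : i + (M - 1) ≤ n := by omega
      have hjd := IH (n - (i + (M - 1))) (by omega) (i + (M - 1)) (by omega) hj rfl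
      have hrel : (gea a n M (i + (M - 1))).natDegree < (gea a n M i).natDegree := by
        have hgeM : M ≤ i + (M - 1) := by omega
        have hgne : gea a n M i ≠ 0 := gea_ne hpos hin
        have hd : (gea a n M (i + (M - 1))).degree < (gea a n M i).degree := by
          rw [gea_ge hM hgeM]
          have hidx : i + (M - 1) - M + 1 = i := by omega
          rw [hidx]
          exact EuclideanDomain.mod_lt _ hgne
        exact natDegree_lt_natDegree (gea_ne hpos hj) hd
      rw [hjd] at hrel
      by_contra hne
      have hlt : (gea a n M i).natDegree < n - i := by omega
      have hdvd : M ∣ (n - i) - (gea a n M i).natDegree :=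
        (Nat.modEq_iff_dvd' (le_of_lt hlt)).mp hres
      have := Nat.le_of_dvd (by omega) hdvd
      omega

lemma gea_lead (hM : 2 ≤ M) (hpos : ∀ i ≤ n, 0 < (gea a n M i).leadingCoeff)
    {i : ℕ} (hiM : i < M) (hin : i ≤ n)
    (hdeg : (gea a n M i).natDegree = n - i) : (gea a n M i).leadingCoeff = a i := by
  rw [leadingCoeff, hdeg, gea_lt hiM, geaInit_coeff]
  rw [if_pos ⟨Nat.sub_le n i, by rw [Nat.sub_sub_self hin, Nat.mod_eq_of_lt hiM]⟩,
    Nat.sub_sub_self hin]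

lemma coeff_zero_of_cls_gap (hM : 2 ≤ M) (hpos : ∀ i ≤ n, 0 < (gea a n M i).leadingCoeff)
    {i e : ℕ} (hin : i ≤ n) (hcond : (e + i) % M ≠ n % M) : (gea a n M i).coeff e = 0 := by
  by_contra h
  exact hcond (gea_cls hM hpos i hin e h)

lemma gea_M_eq (hM : 2 ≤ M) (hMn : M ≤ n) (ha0 : a 0 ≠ 0)
    (hpos : ∀ i ≤ n, 0 < (gea a n M i).leadingCoeff) :
    gea a n M M = gea a n M 0 - C (a 0 / a 1) * (X * gea a n M 1) := by
  have hd1 : (gea a n M 1).natDegree = n - 1 :=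
    deg_exact hM hpos (n - 1) 1 le_rfl (by omega) rfl
  have hl1 : (gea a n M 1).leadingCoeff = a 1 :=
    gea_lead hM hpos (by omega) (by omega) hd1
  have ha1 : a 1 ≠ 0 := by rw [← hl1]; exact ne_of_gt (hpos 1 (by omega))
  have hd0 : (gea a n M 0).natDegree = n := deg0 hM ha0 hpos
  have h1ne : gea a n M 1 ≠ 0 := gea_ne hpos (by omega)
  have hgM : gea a n M M = gea a n M 0 % gea a n M 1 := by
    rw [gea_ge hM le_rfl, Nat.sub_self]
  rw [hgM]
  apply mod_unique _ _ (C (a 0 / a 1) * X) _ h1ne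
  · ring
  · have hdg : (gea a n M 1).degree = ((n - 1 : ℕ) : WithBot ℕ) := by
      rw [degree_eq_natDegree h1ne, hd1]
    rw [hdg]
    rw [Polynomial.degree_lt_iff_coeff_zero]
    intro m hm
    have hm' : n - 1 ≤ m := by exact_mod_cast hm
    obtain ⟨m', rfl⟩ : ∃ m', m = m' + 1 := ⟨m - 1, by omega⟩
    rw [coeff_sub, coeff_C_mul, coeff_X_mul]
    rcases Nat.lt_trichotomy (m' + 1) n with hc | hc | hc
    · -- m' + 1 = n - 1
      have hmn : m' + 1 = n - 1 := by omega
      have hz0 : (gea a n M 0).coeff (m' + 1) = 0 := by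
        apply coeff_zero_of_cls_gap hM hpos (by omega)
        intro hcon
        rw [Nat.add_zero] at hcon
        have hd : M ∣ n - (m' + 1) := (Nat.modEq_iff_dvd' (by omega)).mp hcon
        have : n - (m' + 1) = 1 := by omega
        rw [this] at hd
        have := Nat.le_of_dvd (by omega) hd
        omega
      have hz1 : (gea a n M 1).coeff m' = 0 := by
        apply coeff_zero_of_cls_gap hM hpos (by omega)
        intro hcon
        have hd : M ∣ n - (m' + 1) := (Nat.modEq_iff_dvd' (by omega)).mp hcon
        have : n - (m' + 1) = 1 := by omega
        rw [this] at hd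
        have := Nat.le_of_dvd (by omega) hd
        omega
      rw [hz0, hz1, mul_zero, sub_zero]
    · -- m' + 1 = n
      have hz0 : (gea a n M 0).coeff (m' + 1) = a 0 := by
        rw [gea_lt (by omega : (0:ℕ) < M), geaInit_coeff, hc,
          if_pos ⟨le_rfl, by simp⟩, Nat.sub_self]
      have hz1 : (gea a n M 1).coeff m' = a 1 := by
        have : m' = (gea a n M 1).natDegree := by omega
        rw [this, ← leadingCoeff, hl1]
      rw [hz0, hz1]
      field_simp
      ring
    · have hz0 : (gea a n M 0).coeff (m' + 1) = 0 :=
        coeff_eq_zero_of_natDegree_lt (by omega)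
      have hz1 : (gea a n M 1).coeff m' = 0 :=
        coeff_eq_zero_of_natDegree_lt (by omega)
      rw [hz0, hz1, mul_zero, sub_zero]

end HW3


namespace HW4
open HW HW2 HW3

noncomputable def bseq (a : ℕ → ℝ) (n M : ℕ) : ℕ → ℝ :=
  fun l => if (l + 1) % M = 0 then (gea a n M M).coeff (n - 1 - l) else a (l + 1)

variable {a : ℕ → ℝ} {n M : ℕ}

lemma one_mod (hM : 2 ≤ M) : 1 % M = 1 := Nat.mod_eq_of_lt (by omega)

lemma bseq_zero (hM : 2 ≤ M) : bseq a n M 0 = a 1 := by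
  unfold bseq
  rw [if_neg (by rw [one_mod hM]; omega)]

lemma geaInit_bseq_lo (hM : 2 ≤ M) (hMn : M ≤ n) {j : ℕ} (hj : j + 1 < M) :
    geaInit (bseq a n M) (n - 1) M j = geaInit a n M (j + 1) := by
  ext e
  rw [geaInit_coeff, geaInit_coeff]
  by_cases hc : e ≤ n - 1 ∧ (n - 1 - e) % M = j
  · obtain ⟨h1, h2⟩ := hc
    obtain ⟨q, hq⟩ : ∃ q, n - 1 - e = M * q + j :=
      ⟨(n - 1 - e) / M, by have := Nat.div_add_mod (n - 1 - e) M; omega⟩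
    have hne : n - e = M * q + (j + 1) := by omega
    have hc2 : (n - e) % M = j + 1 := by
      rw [hne, Nat.add_comm, Nat.add_mul_mod_self_left, Nat.mod_eq_of_lt hj]
    rw [if_pos ⟨by omega, h2⟩, if_pos ⟨by omega, hc2⟩]
    unfold bseq
    rw [if_neg (by rw [show n - 1 - e + 1 = n - e by omega, hc2]; omega)]
    congr 1
    omega
  · rw [if_neg hc]
    by_cases hc2 : e ≤ n ∧ (n - e) % M = j + 1
    · exfalso
      obtain ⟨h1, h2⟩ := hc2
      have hpos : 0 < n - e := by
        rcases Nat.eq_zero_or_pos (n - e) with h | h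
        · rw [h, Nat.zero_mod] at h2; omega
        · exact h
      obtain ⟨q, hq⟩ : ∃ q, n - e = M * q + (j + 1) :=
        ⟨(n - e) / M, by have := Nat.div_add_mod (n - e) M; omega⟩
      have h3 : n - 1 - e = M * q + j := by omega
      have h4 : (n - 1 - e) % M = j := by
        rw [h3, Nat.add_comm, Nat.add_mul_mod_self_left, Nat.mod_eq_of_lt (by omega)]
      exact hc ⟨by omega, h4⟩
    · rw [if_neg hc2]

lemma geaInit_bseq_hi (hM : 2 ≤ M) (hMn : M ≤ n)
    (hpos : ∀ i ≤ n, 0 < (gea a n M i).leadingCoeff) :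
    geaInit (bseq a n M) (n - 1) M (M - 1) = gea a n M M := by
  have hdegM : (gea a n M M).natDegree ≤ n - M := deg_le hM hpos M hMn
  ext e
  rw [geaInit_coeff]
  by_cases hc : e ≤ n - 1 ∧ (n - 1 - e) % M = M - 1
  · obtain ⟨h1, h2⟩ := hc
    obtain ⟨q, hq⟩ : ∃ q, n - 1 - e = M * q + (M - 1) :=
      ⟨(n - 1 - e) / M, by have := Nat.div_add_mod (n - 1 - e) M; omega⟩
    rw [if_pos ⟨h1, h2⟩]
    unfold bseq
    have hmod : (n - 1 - e + 1) % M = 0 := by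
      rw [show n - 1 - e + 1 = M * (q + 1) by rw [Nat.mul_add]; omega, Nat.mul_mod_right]
    rw [if_pos hmod]
    congr 1
    omega
  · rw [if_neg hc]
    by_cases h1 : e ≤ n - 1
    · -- wrong residue; coeff of gea M vanishes
      symm
      apply coeff_zero_of_cls_gap hM hpos hMn
      intro hcon
      apply hc
      refine ⟨h1, ?_⟩
      have hcon2 : e % M = n % M := by
        rw [← hcon, Nat.add_mod_right]
      have hdvd : M ∣ n - e := (Nat.modEq_iff_dvd' (by omega)).mp hcon2
      obtain ⟨q, hq⟩ := hdvd
      have hq1 : 1 ≤ q := by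
        rcases Nat.eq_zero_or_pos q with h | h
        · rw [h, Nat.mul_zero] at hq; omega
        · exact h
      have h3 : n - 1 - e = M * (q - 1) + (M - 1) := by
        have h4 : M * q = M * (q - 1) + M := by
          conv_lhs => rw [show q = q - 1 + 1 by omega]
          rw [Nat.mul_add, Nat.mul_one]
        omega
      rw [h3, Nat.add_comm, Nat.add_mul_mod_self_left, Nat.mod_eq_of_lt (by omega)]
    · symm
      apply coeff_eq_zero_of_natDegree_lt
      omega

lemma gea_bseq (hM : 2 ≤ M) (hMn : M ≤ n)
    (hpos : ∀ i ≤ n, 0 < (gea a n M i).leadingCoeff) :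
    ∀ i, gea (bseq a n M) (n - 1) M i = gea a n M (i + 1) := by
  intro i
  induction i using Nat.strong_induction_on with
  | _ i IH =>
    by_cases h : i < M
    · by_cases h2 : i + 1 < M
      · rw [gea_lt h, gea_lt h2, geaInit_bseq_lo hM hMn h2]
      · have hi : i = M - 1 := by omega
        subst hi
        rw [gea_lt h, geaInit_bseq_hi hM hMn hpos]
        congr 1
        omega
    · push_neg at h
      rw [gea_ge hM h, gea_ge hM (by omega : M ≤ i + 1)]
      rw [IH (i - M) (by omega), IH (i - M + 1) (by omega)]
      congr 2 <;> omega

lemma bseq_pos (hM : 2 ≤ M) (hMn : M ≤ n)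
    (hpos : ∀ i ≤ n, 0 < (gea a n M i).leadingCoeff) :
    ∀ i ≤ n - 1, 0 < (gea (bseq a n M) (n - 1) M i).leadingCoeff := by
  intro i hi
  rw [gea_bseq hM hMn hpos]
  exact hpos (i + 1) (by omega)

lemma bseq_zero_ne (hM : 2 ≤ M) (hMn : M ≤ n) (ha0 : a 0 ≠ 0)
    (hpos : ∀ i ≤ n, 0 < (gea a n M i).leadingCoeff) : bseq a n M 0 ≠ 0 := by
  rw [bseq_zero hM]
  have hd1 : (gea a n M 1).natDegree = n - 1 :=
    deg_exact hM hpos (n - 1) 1 le_rfl (by omega) rfl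
  have hl1 : (gea a n M 1).leadingCoeff = a 1 :=
    gea_lead hM hpos (by omega) (by omega) hd1
  rw [← hl1]
  exact ne_of_gt (hpos 1 (by omega))

end HW4


namespace HW5
open HW HW2 HW3 HW4

variable {a : ℕ → ℝ} {n M : ℕ}

lemma coeff_f0 (hM : 2 ≤ M) {e : ℕ} (he : e ≤ n) (hres : (n - e) % M = 0) :
    (gea a n M 0).coeff e = a (n - e) := by
  rw [gea_lt (by omega), geaInit_coeff, if_pos ⟨he, hres⟩]

lemma coeff_f1 (hM : 2 ≤ M) {e : ℕ} (he : e ≤ n) (hres : (n - e) % M = 1) :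
    (gea a n M 1).coeff e = a (n - e) := by
  rw [gea_lt (by omega), geaInit_coeff, if_pos ⟨he, hres⟩]

lemma row_id (hM : 2 ≤ M) (hMn : M ≤ n) (ha0 : a 0 ≠ 0)
    (hpos : ∀ i ≤ n, 0 < (gea a n M i).leadingCoeff) (i j : ℕ) :
    hEntry a n M i j = hEntry (bseq a n M) (n - 1) M (i + 1) j +
      (if (i + 1) % M = 0 then (a 0 / a 1) * hEntry (bseq a n M) (n - 1) M i j else 0) := by
  have hd1 : (gea a n M 1).natDegree = n - 1 :=
    deg_exact hM hpos (n - 1) 1 le_rfl (by omega) rfl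
  have hl1 : (gea a n M 1).leadingCoeff = a 1 :=
    gea_lead hM hpos (by omega) (by omega) hd1
  have ha1 : a 1 ≠ 0 := by rw [← hl1]; exact ne_of_gt (hpos 1 (by omega))
  have hJmod : M * (j + 1) % M = 0 := Nat.mul_mod_right _ _
  have hH3 := gea_M_eq hM hMn ha0 hpos
  unfold hEntry
  by_cases hmod : (i + 1) % M = 0
  · rw [if_pos hmod]
    obtain ⟨s, hs⟩ : ∃ s, i + 1 = M * s :=
      ⟨(i + 1) / M, by have := Nat.div_add_mod (i + 1) M; omega⟩
    have hs1 : 1 ≤ s := by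
      rcases Nat.eq_zero_or_pos s with h | h
      · rw [h, Nat.mul_zero] at hs; omega
      · exact h
    rcases Nat.lt_trichotomy s (j + 1) with hsj | hsj | hsj
    · -- s < j + 1
      set t := j + 1 - s with ht
      have ht1 : 1 ≤ t := by omega
      have hsplit : M * (j + 1) = M * s + M * t := by
        rw [← Nat.mul_add]; congr 1; omega
      have htM : M ≤ M * t := by
        calc M = M * 1 := by omega
        _ ≤ M * t := Nat.mul_le_mul_left M ht1
      have hJI : M * (j + 1) - (i + 1) = M * t := by omega
      have hJI2 : M * (j + 1) - (i + 1 + 1) = M * t - 1 := by omega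
      have hmodt : (M * t - 1 + 1) % M = 0 := by
        rw [show M * t - 1 + 1 = M * t by omega, Nat.mul_mod_right]
      have hmodt2 : (M * t + 1) % M = 1 := by
        rw [Nat.add_comm, Nat.add_mul_mod_self_left, one_mod hM]
      rcases Nat.lt_trichotomy (M * t) n with hmt | hmt | hmt
      · -- M * t ≤ n - 1 : main case
        split_ifs with hA hB hC hC hB hC hC
        case pos =>
          rw [hJI, hJI2]
          unfold bseq
          rw [if_pos hmodt, if_neg (by rw [hmodt2]; omega)]
          have het : n - 1 - (M * t - 1) = n - M * t := by omega
          rw [het, hH3, coeff_sub, coeff_C_mul]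
          have hX : (X * gea a n M 1).coeff (n - M * t)
              = (gea a n M 1).coeff (n - M * t - 1) := by
            conv_lhs => rw [show n - M * t = (n - M * t - 1) + 1 by omega]
            rw [coeff_X_mul]
          rw [hX]
          rw [coeff_f0 hM (by omega)
            (by rw [show n - (n - M * t) = M * t by omega, Nat.mul_mod_right])]
          rw [coeff_f1 hM (by omega) (by
            rw [show n - (n - M * t - 1) = M * t + 1 by omega]; exact hmodt2)]
          rw [show n - (n - M * t) = M * t by omega,
            show n - (n - M * t - 1) = M * t + 1 by omega]
          ring
        all_goals exfalso; omega
      · -- M * t = n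
        split_ifs with hA hB hC hC hB hC hC
        case pos =>
          exfalso; omega
        case neg =>
          rw [hJI, hJI2]
          unfold bseq
          rw [if_pos hmodt]
          have het : n - 1 - (M * t - 1) = 0 := by omega
          rw [het, hH3, coeff_sub, coeff_C_mul, mul_coeff_zero, coeff_X_zero, zero_mul,
            mul_zero, sub_zero]
          rw [coeff_f0 hM (Nat.zero_le n) (by rw [Nat.sub_zero, ← hmt, Nat.mul_mod_right]),
            Nat.sub_zero, add_zero, hmt]
        all_goals exfalso; omega
      · -- n < M * t : everything vanishes
        split_ifs with hA hB hC hC hB hC hC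
        all_goals first
          | (exfalso; omega)
          | (rw [mul_zero, add_zero])
          | (rw [zero_add, mul_zero])
          | (rw [add_zero])
    · -- s = j + 1 : I = J
      have hIJ : i + 1 = M * (j + 1) := by rw [hs, hsj]
      have hn1 : 1 ≤ n := by omega
      split_ifs with hA hB hC hC hB hC hC
      all_goals try (exfalso; omega)
      case pos =>
        rw [show M * (j + 1) - (i + 1) = 0 by omega]
        rw [bseq_zero hM, zero_add, div_mul_cancel₀ _ ha1]
    · -- j + 1 < s : all zero
      have hlt : M * (j + 1) < M * s := by
        have h2 : M * (j + 2) = M * (j + 1) + M := Nat.mul_succ M (j + 1)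
        have := Nat.mul_le_mul_left M (show j + 2 ≤ s by omega)
        omega
      split_ifs with hA hB hC hC hB hC hC
      all_goals first
        | (exfalso; omega)
        | (rw [mul_zero, add_zero])
        | (rw [zero_add, mul_zero])
        | (rw [add_zero])
  · rw [if_neg hmod, add_zero]
    have hne : i + 1 ≠ M * (j + 1) := by
      intro h
      rw [h] at hmod
      exact hmod hJmod
    by_cases hg : i + 1 ≤ M * (j + 1) ∧ M * (j + 1) - (i + 1) ≤ n
    · obtain ⟨h1, h2⟩ := hg
      have hmod2 : (M * (j + 1) - (i + 1)) % M ≠ 0 := by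
        intro h0
        apply hmod
        obtain ⟨u, hu⟩ := Nat.dvd_of_mod_eq_zero h0
        have hMu : M * u ≤ M * (j + 1) := by omega
        have huj : u ≤ j + 1 := Nat.le_of_mul_le_mul_left hMu (by omega)
        obtain ⟨v, hv⟩ : ∃ v, j + 1 = u + v := ⟨j + 1 - u, by omega⟩
        have hMv : M * (j + 1) = M * u + M * v := by rw [← Nat.mul_add, ← hv]
        have hiv : i + 1 = M * v := by omega
        rw [hiv, Nat.mul_mod_right]
      split_ifs with hA hB hB
      · unfold bseq
        rw [if_neg (show ¬((M * (j + 1) - (i + 1 + 1) + 1) % M = 0) from by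
          rw [show M * (j + 1) - (i + 1 + 1) + 1 = M * (j + 1) - (i + 1) by omega]
          exact hmod2)]
        congr 1
        omega
      all_goals exfalso; omega
    · split_ifs with hA hB hB <;> first | rfl | (exfalso; omega)
end HW5


namespace HW6

variable {A B : ℕ → ℕ → ℝ} {q : ℝ} {M : ℕ}

lemma term_main (hM : 2 ≤ M) (hq : 0 ≤ q) (hTN : IsTotallyNonneg B)
    {p : ℕ} (R C : Fin p → ℕ) (hR : StrictMono R) (hC : StrictMono C)
    (S : Finset (Fin p)) :
    (0 ≤ Matrix.det (Matrix.of (S.piecewise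
        (fun s t => B (R s + 1) (C t))
        (fun s t => if (R s + 1) % M = 0 then q * B (R s) (C t) else 0)))) ∧
    (S ≠ Finset.univ → (∀ s, (R s + 1) % M = 0 → ∃ s', R s' + 1 = R s) →
      Matrix.det (Matrix.of (S.piecewise
        (fun s t => B (R s + 1) (C t))
        (fun s t => if (R s + 1) % M = 0 then q * B (R s) (C t) else 0))) = 0) := by
  classical
  set U : Fin p → Fin p → ℝ := fun s t => B (R s + 1) (C t) with hU
  set W : Fin p → Fin p → ℝ := fun s t => if (R s + 1) % M = 0 then q * B (R s) (C t) else 0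
    with hW
  by_cases hval : ∀ s ∉ S, (R s + 1) % M = 0
  · -- factor out the diagonal
    set d : Fin p → ℝ := fun s => if s ∈ S then 1 else q with hd
    set ρ : Fin p → ℕ := fun s => if s ∈ S then R s + 1 else R s with hρ
    set N : Matrix (Fin p) (Fin p) ℝ := Matrix.of fun s t => B (ρ s) (C t) with hN
    have hfact : Matrix.of (S.piecewise U W) = Matrix.diagonal d * N := by
      ext s t
      rw [Matrix.diagonal_mul]
      by_cases hsS : s ∈ S
      · simp only [Matrix.of_apply, S.piecewise_eq_of_mem _ _ hsS, hU, hd, hρ, hN,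
          if_pos hsS, one_mul]
      · simp only [Matrix.of_apply, S.piecewise_eq_of_notMem _ _ hsS, hW, hd, hρ, hN,
          if_neg hsS, if_pos (hval s hsS)]
    have hdet : Matrix.det (Matrix.of (S.piecewise U W)) = (∏ s, d s) * N.det := by
      rw [hfact, Matrix.det_mul, Matrix.det_diagonal]
    have hwm : ∀ s s' : Fin p, s < s' → ρ s ≤ ρ s' := by
      intro s s' hss
      have h1 : R s < R s' := hR hss
      have h2 : ρ s ≤ R s + 1 := by
        show (if s ∈ S then R s + 1 else R s) ≤ R s + 1
        split_ifs <;> omega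
      have h3 : R s' ≤ ρ s' := by
        show R s' ≤ (if s' ∈ S then R s' + 1 else R s')
        split_ifs <;> omega
      omega
    by_cases hinj : Function.Injective ρ
    · have hsm : StrictMono ρ := by
        intro s s' hss
        exact lt_of_le_of_ne (hwm s s' hss) (fun he => (ne_of_lt hss) (hinj he))
      constructor
      · rw [hdet]
        apply mul_nonneg
        · apply Finset.prod_nonneg
          intro s _
          show (0:ℝ) ≤ if s ∈ S then 1 else q
          split_ifs
          · exact zero_le_one
          · exact hq
        · exact hTN p ρ C hsm hC
      · intro hS hpred
        exfalso
        obtain ⟨s0, hs0⟩ : ∃ s, s ∉ S := by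
          by_contra h
          push_neg at h
          exact hS (Finset.eq_univ_iff_forall.mpr h)
        have hm0 : (R s0 + 1) % M = 0 := hval s0 hs0
        obtain ⟨s', hs'⟩ := hpred s0 hm0
        by_cases hs'S : s' ∈ S
        · have : ρ s' = ρ s0 := by
            rw [hρ]
            simp only [if_pos hs'S, if_neg hs0]
            exact hs'
          have := hinj this
          rw [this] at hs'S
          exact hs0 hs'S
        · have hm' : (R s' + 1) % M = 0 := hval s' hs'S
          rw [hs'] at hm'
          have hd1 : M ∣ R s0 := Nat.dvd_of_mod_eq_zero hm'
          have hd2 : M ∣ R s0 + 1 := Nat.dvd_of_mod_eq_zero hm0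
          have hd3 : M ∣ 1 := by simpa using Nat.dvd_sub hd2 hd1
          have := Nat.le_of_dvd (by omega) hd3
          omega
    · obtain ⟨s, s', hne, heq⟩ : ∃ s s', s ≠ s' ∧ ρ s = ρ s' := by
        rw [Function.Injective] at hinj
        push_neg at hinj
        obtain ⟨s, s', h1, h2⟩ := hinj
        exact ⟨s, s', h2, h1⟩
      have hNz : N.det = 0 := by
        apply Matrix.det_zero_of_row_eq hne
        funext t
        show B (ρ s) (C t) = B (ρ s') (C t)
        rw [heq]
      constructor
      · rw [hdet, hNz, mul_zero]
      · intro _ _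
        rw [hdet, hNz, mul_zero]
  · push_neg at hval
    obtain ⟨s, hsS, hsm⟩ := hval
    have hz : Matrix.det (Matrix.of (S.piecewise U W)) = 0 := by
      apply Matrix.det_eq_zero_of_row_eq_zero s
      intro t
      rw [Matrix.of_apply, S.piecewise_eq_of_notMem _ _ hsS]
      exact if_neg hsm
    exact ⟨by rw [hz], fun _ _ => by rw [hz]⟩

lemma det_expand (hrow : ∀ i j, A i j = B (i + 1) j + (if (i + 1) % M = 0 then q * B i j else 0))
    {p : ℕ} (R C : Fin p → ℕ) :
    Matrix.det (Matrix.of fun s t : Fin p => A (R s) (C t)) =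
      ∑ S : Finset (Fin p), Matrix.det (Matrix.of (S.piecewise
        (fun s t => B (R s + 1) (C t))
        (fun s t => if (R s + 1) % M = 0 then q * B (R s) (C t) else 0))) := by
  classical
  set U : Fin p → Fin p → ℝ := fun s t => B (R s + 1) (C t) with hU
  set W : Fin p → Fin p → ℝ := fun s t => if (R s + 1) % M = 0 then q * B (R s) (C t) else 0
    with hW
  have hUW : (Matrix.of fun s t : Fin p => A (R s) (C t)) = U + W := by
    funext s t
    simp only [Matrix.of_apply, Pi.add_apply, hU, hW]
    exact hrow (R s) (C t)
  rw [hUW]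
  exact (Matrix.detRowAlternating :
    (Fin p → ℝ) [⋀^Fin p]→ₗ[ℝ] ℝ).toMultilinearMap.map_add_univ U W

lemma expand_nonneg (hM : 2 ≤ M) (hq : 0 ≤ q) (hTN : IsTotallyNonneg B)
    (hrow : ∀ i j, A i j = B (i + 1) j + (if (i + 1) % M = 0 then q * B i j else 0)) :
    IsTotallyNonneg A := by
  intro p R C hR hC
  rw [det_expand hrow R C]
  apply Finset.sum_nonneg
  intro S _
  exact (term_main hM hq hTN R C hR hC S).1

lemma expand_eq (hM : 2 ≤ M) (hq : 0 ≤ q) (hTN : IsTotallyNonneg B)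
    (hrow : ∀ i j, A i j = B (i + 1) j + (if (i + 1) % M = 0 then q * B i j else 0))
    {p : ℕ} (R C : Fin p → ℕ) (hR : StrictMono R) (hC : StrictMono C)
    (hpred : ∀ s, (R s + 1) % M = 0 → ∃ s', R s' + 1 = R s) :
    Matrix.det (Matrix.of fun s t : Fin p => A (R s) (C t)) =
      Matrix.det (Matrix.of fun s t : Fin p => B (R s + 1) (C t)) := by
  classical
  rw [det_expand hrow R C]
  rw [Finset.sum_eq_single Finset.univ]
  · rw [Finset.piecewise_univ]
  · intro S _ hS
    exact (term_main hM hq hTN R C hR hC S).2 hS hpred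
  · intro h
    exact absurd (Finset.mem_univ _) h

end HW6


namespace HW7
open HW HW2 HW3 HW4 HW5 HW6

variable {a : ℕ → ℝ} {M : ℕ}

lemma base_entry (hM : 2 ≤ M) (i j : ℕ) :
    hEntry a (M - 1) M i j =
      if M * j ≤ i ∧ i < M * j + M then a (M * (j + 1) - (i + 1)) else 0 := by
  unfold hEntry
  have hms : M * (j + 1) = M * j + M := Nat.mul_succ M j
  by_cases h : M * j ≤ i ∧ i < M * j + M
  · rw [if_pos (show i + 1 ≤ M * (j + 1) ∧ M * (j + 1) - (i + 1) ≤ M - 1 by omega), if_pos h]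
  · have hneg : ¬(i + 1 ≤ M * (j + 1) ∧ M * (j + 1) - (i + 1) ≤ M - 1) := by
      intro hc
      exact h (by omega)
    rw [if_neg hneg, if_neg h]

lemma base_coeffs_pos (hM : 2 ≤ M)
    (hpos : ∀ i ≤ M - 1, 0 < (gea a (M - 1) M i).leadingCoeff) :
    ∀ l ≤ M - 1, 0 < a l := by
  intro l hl
  have h := hpos l hl
  rw [gea_lt (by omega)] at h
  have hinit : geaInit a (M - 1) M l = C (a l) * X ^ (M - 1 - l) := by
    unfold geaInit
    rw [Finset.sum_eq_single l]
    · rw [if_pos (Nat.mod_eq_of_lt (by omega))]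
    · intro l' hl' hne
      simp only [Finset.mem_range] at hl'
      rw [if_neg (by rw [Nat.mod_eq_of_lt (by omega)]; exact hne)]
    · intro h
      exact absurd (Finset.mem_range.2 (by omega)) h
  rw [hinit, C_mul_X_pow_eq_monomial, leadingCoeff_monomial] at h
  exact h

lemma base_TN (hM : 2 ≤ M) (hapos : ∀ l ≤ M - 1, 0 < a l) :
    IsTotallyNonneg (hEntry a (M - 1) M) := by
  intro p R C hR hC
  classical
  by_cases hrow0 : ∀ s : Fin p, ∃ t : Fin p, M * C t ≤ R s ∧ R s < M * C t + M
  · choose τ hτ1 hτ2 using hrow0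
    have huniq : ∀ s t, M * C t ≤ R s ∧ R s < M * C t + M → t = τ s := by
      intro s t ⟨h1, h2⟩
      by_contra hne
      rcases Nat.lt_trichotomy (C t) (C (τ s)) with h | h | h
      · have h3 := Nat.mul_le_mul_left M (show C t + 1 ≤ C (τ s) by omega)
        rw [Nat.mul_add, Nat.mul_one] at h3
        have := hτ1 s
        omega
      · exact hne (hC.injective h)
      · have h3 := Nat.mul_le_mul_left M (show C (τ s) + 1 ≤ C t by omega)
        rw [Nat.mul_add, Nat.mul_one] at h3
        have := hτ2 s
        omega
    have hmono : Monotone τ := by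
      intro s s' hss
      by_contra hlt
      push_neg at hlt
      have hc : C (τ s') + 1 ≤ C (τ s) := by
        have := hC hlt
        omega
      have h3 := Nat.mul_le_mul_left M hc
      rw [Nat.mul_add, Nat.mul_one] at h3
      have h4 := hτ1 s
      have h5 := hτ2 s'
      have h6 : R s ≤ R s' := hR.monotone hss
      omega
    by_cases hsurj : Function.Surjective τ
    · have hinj : Function.Injective τ := Finite.injective_iff_surjective.mpr hsurj
      have hsm : StrictMono τ := hmono.strictMono_of_injective hinj
      have hid : τ = id := by
        set_option linter.deprecated false in
        exact (hsm.range_inj strictMono_id).mp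
          (by rw [Set.range_id]; exact Set.range_eq_univ.mpr hsurj)
      have hdiag : (Matrix.of fun s t : Fin p => hEntry a (M - 1) M (R s) (C t)) =
          Matrix.diagonal (fun s => hEntry a (M - 1) M (R s) (C s)) := by
        ext s t
        by_cases hst : s = t
        · subst hst
          rw [Matrix.diagonal_apply_eq]
          rfl
        · rw [Matrix.diagonal_apply_ne _ hst, Matrix.of_apply, base_entry hM]
          rw [if_neg]
          intro hcon
          have := huniq s t ⟨hcon.1, hcon.2⟩
          rw [hid] at this
          exact hst (by rw [this]; rfl)
      rw [hdiag, Matrix.det_diagonal]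
      apply Finset.prod_nonneg
      intro s _
      rw [base_entry hM]
      have hts : τ s = s := by rw [hid]; rfl
      have h1 := hτ1 s
      have h2 := hτ2 s
      rw [hts] at h1 h2
      rw [if_pos ⟨h1, h2⟩]
      apply le_of_lt
      apply hapos
      have hms : M * (C s + 1) = M * C s + M := Nat.mul_succ M (C s)
      omega
    · obtain ⟨t0, ht0⟩ : ∃ t0, t0 ∉ Set.range τ := by
        by_contra h
        push_neg at h
        exact hsurj fun t => h t
      apply le_of_eq
      symm
      apply Matrix.det_eq_zero_of_column_eq_zero t0
      intro s
      rw [Matrix.of_apply, base_entry hM]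
      rw [if_neg]
      intro hcon
      exact ht0 ⟨s, (huniq s t0 ⟨hcon.1, hcon.2⟩).symm⟩
  · push_neg at hrow0
    obtain ⟨s0, hs0⟩ := hrow0
    apply le_of_eq
    symm
    apply Matrix.det_eq_zero_of_row_eq_zero s0
    intro t
    rw [Matrix.of_apply, base_entry hM, if_neg]
    intro hcon
    exact Nat.lt_irrefl _ (lt_of_lt_of_le hcon.2 (hs0 t hcon.1))

lemma base_minors (hM : 2 ≤ M) (hapos : ∀ l ≤ M - 1, 0 < a l) :
    ∀ k r : ℕ, 1 ≤ k → k ≤ M - 1 → 1 ≤ r →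
      (M - 1) * (r - 1) + (M - k) ≤ M - 1 → 0 < specialMinor a (M - 1) M k r := by
  intro k r hk1 hkM hr1 hbound
  have hr : r = 1 := by
    by_contra hr2
    have h2 : 2 ≤ r := by omega
    have : M - 1 ≤ (M - 1) * (r - 1) := Nat.le_mul_of_pos_right (M - 1) (by omega)
    omega
  subst hr
  unfold specialMinor
  rw [Matrix.det_fin_one, Matrix.of_apply]
  have h0 : ((0 : Fin 1) : ℕ) = 0 := rfl
  rw [h0, Nat.add_zero, base_entry hM]
  rw [if_pos (by constructor <;> omega)]
  apply hapos
  omega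

end HW7


namespace HW8
open HW HW2 HW3 HW4 HW5 HW6 HW7

lemma hEntry_shift {x : ℕ → ℝ} {m M : ℕ} (hM : 2 ≤ M) (i j : ℕ) :
    hEntry x m M (M + i) (j + 1) = hEntry x m M i j := by
  unfold hEntry
  have hms : M * (j + 1 + 1) = M * (j + 1) + M := Nat.mul_succ M (j + 1)
  by_cases h : i + 1 ≤ M * (j + 1) ∧ M * (j + 1) - (i + 1) ≤ m
  · rw [if_pos (show M + i + 1 ≤ M * (j + 1 + 1) ∧ M * (j + 1 + 1) - (M + i + 1) ≤ m by omega),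
      if_pos h]
    congr 1
    omega
  · have hneg : ¬(M + i + 1 ≤ M * (j + 1 + 1) ∧ M * (j + 1 + 1) - (M + i + 1) ≤ m) := by
      intro hc
      exact h (by omega)
    rw [if_neg hneg, if_neg h]

theorem key (M : ℕ) (hM : 2 ≤ M) : ∀ n, ∀ a : ℕ → ℝ, M - 1 ≤ n → a 0 ≠ 0 →
    (∀ i ≤ n, 0 < (gea a n M i).leadingCoeff) →
    ((∀ k r : ℕ, 1 ≤ k → k ≤ M - 1 → 1 ≤ r →
        (M - 1) * (r - 1) + (M - k) ≤ n → 0 < specialMinor a n M k r) ∧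
      IsTotallyNonneg (hEntry a n M)) := by
  intro n
  induction n using Nat.strong_induction_on with
  | _ n IH =>
    intro a hn ha0 hpos
    by_cases hbase : n < M
    · have hnM : n = M - 1 := by omega
      subst hnM
      have hapos := base_coeffs_pos hM hpos
      exact ⟨base_minors hM hapos, base_TN hM hapos⟩
    · push_neg at hbase
      set b := bseq a n M with hbdef
      have hbpos := bseq_pos hM hbase hpos
      have hb0 := bseq_zero_ne hM hbase ha0 hpos
      have hrow := row_id hM hbase ha0 hpos
      have hd1 : (gea a n M 1).natDegree = n - 1 :=
        deg_exact hM hpos (n - 1) 1 le_rfl (by omega) rfl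
      have hl1 : (gea a n M 1).leadingCoeff = a 1 :=
        gea_lead hM hpos (by omega) (by omega) hd1
      have ha1pos : 0 < a 1 := by rw [← hl1]; exact hpos 1 (by omega)
      have hd0 : (gea a n M 0).natDegree = n - 0 := by
        rw [Nat.sub_zero]; exact deg0 hM ha0 hpos
      have hl0 : (gea a n M 0).leadingCoeff = a 0 :=
        gea_lead hM hpos (by omega) (by omega) hd0
      have ha0pos : 0 < a 0 := by rw [← hl0]; exact hpos 0 (by omega)
      have hq : 0 ≤ a 0 / a 1 := le_of_lt (div_pos ha0pos ha1pos)
      obtain ⟨IHm, IHtn⟩ := IH (n - 1) (by omega) b (by omega) hb0 hbpos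
      constructor
      · intro k r hk1 hkM hr1 hb
        set R : Fin r → ℕ := fun s => k - 1 + (s : ℕ) with hRdef
        set C : Fin r → ℕ := fun t => (t : ℕ) with hCdef
        have hR : StrictMono R := by
          intro s s' h
          have hv : (s : ℕ) < s' := h
          show k - 1 + (s : ℕ) < k - 1 + (s' : ℕ)
          omega
        have hC : StrictMono C := fun _ _ h => h
        have hpred : ∀ s, (R s + 1) % M = 0 → ∃ s', R s' + 1 = R s := by
          intro s hs
          have hs1 : 1 ≤ (s : ℕ) := by
            by_contra h0
            push_neg at h0
            have hs0 : (s : ℕ) = 0 := by omega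
            rw [hRdef] at hs
            simp only [hs0] at hs
            rw [show k - 1 + 0 + 1 = k by omega] at hs
            rw [Nat.mod_eq_of_lt (by omega)] at hs
            omega
          refine ⟨⟨(s : ℕ) - 1, by omega⟩, ?_⟩
          show k - 1 + ((s : ℕ) - 1) + 1 = k - 1 + (s : ℕ)
          omega
        have heq : specialMinor a n M k r =
            Matrix.det (Matrix.of fun s t : Fin r => hEntry b (n - 1) M (R s + 1) (C t)) :=
          expand_eq hM hq IHtn hrow R C hR hC hpred
        rw [heq]
        by_cases hkM2 : k + 1 ≤ M - 1
        · have hconv : (Matrix.of fun s t : Fin r => hEntry b (n - 1) M (R s + 1) (C t)) =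
              (Matrix.of fun s t : Fin r => hEntry b (n - 1) M (k + 1 - 1 + (s : ℕ)) (t : ℕ)) := by
            ext s t
            simp only [Matrix.of_apply]
            congr 1
            show k - 1 + (s : ℕ) + 1 = k + 1 - 1 + (s : ℕ)
            omega
          rw [hconv]
          exact IHm (k + 1) r (by omega) hkM2 hr1 (by omega)
        · have hk : k = M - 1 := by omega
          subst hk
          by_cases hr2 : r = 1
          · subst hr2
            rw [Matrix.det_fin_one]
            have hv : (Matrix.of fun s t : Fin 1 => hEntry b (n - 1) M (R s + 1) (C t)) 0 0
                = b 0 := by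
              simp only [Matrix.of_apply, hRdef, hCdef]
              rw [show ((0 : Fin 1) : ℕ) = 0 from rfl]
              unfold hEntry
              rw [if_pos (show M - 1 - 1 + 0 + 1 + 1 ≤ M * (0 + 1) ∧
                M * (0 + 1) - (M - 1 - 1 + 0 + 1 + 1) ≤ n - 1 by omega)]
              congr 1
              omega
            rw [hv, hbdef, bseq_zero hM]
            exact ha1pos
          · obtain ⟨r', rfl⟩ : ∃ r', r = r' + 1 := ⟨r - 1, by omega⟩
            have hr1' : 1 ≤ r' := by omega
            rw [Matrix.det_succ_column_zero]
            have hcol : ∀ s : Fin (r' + 1),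
                (Matrix.of fun s t : Fin (r' + 1) => hEntry b (n - 1) M (R s + 1) (C t)) s 0 =
                if (s : ℕ) = 0 then b 0 else 0 := by
              intro s
              simp only [Matrix.of_apply]
              show hEntry b (n - 1) M (M - 1 - 1 + (s : ℕ) + 1) ((0 : Fin (r' + 1)) : ℕ) = _
              unfold hEntry
              have h00 : ((0 : Fin (r' + 1)) : ℕ) = 0 := rfl
              rw [h00]
              by_cases hs0 : (s : ℕ) = 0
              · rw [hs0, if_pos (show M - 1 - 1 + 0 + 1 + 1 ≤ M * (0 + 1) ∧
                  M * (0 + 1) - (M - 1 - 1 + 0 + 1 + 1) ≤ n - 1 by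
                    constructor <;> [omega; omega])]
                rw [if_pos rfl]
                congr 1
                omega
              · rw [if_neg (show ¬(M - 1 - 1 + (s : ℕ) + 1 + 1 ≤ M * (0 + 1) ∧
                    M * (0 + 1) - (M - 1 - 1 + (s : ℕ) + 1 + 1) ≤ n - 1) from fun hc => by omega),
                  if_neg hs0]
            rw [Finset.sum_eq_single 0]
            · rw [hcol 0]
              have h0v : ((0 : Fin (r' + 1)) : ℕ) = 0 := rfl
              rw [h0v, if_pos rfl, pow_zero, one_mul]
              have hsub : ((Matrix.of fun s t : Fin (r' + 1) =>
                  hEntry b (n - 1) M (R s + 1) (C t)).submatrix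
                    (Fin.succAbove 0) Fin.succ) =
                  (Matrix.of fun s t : Fin r' =>
                    hEntry b (n - 1) M (1 - 1 + (s : ℕ)) (t : ℕ)) := by
                ext s t
                have hsa : ((Fin.succAbove (0 : Fin (r' + 1)) s : Fin (r' + 1)) : ℕ)
                    = (s : ℕ) + 1 := by
                  rw [Fin.succAbove_zero]
                  rfl
                have hsc : ((Fin.succ t : Fin (r' + 1)) : ℕ) = (t : ℕ) + 1 := rfl
                simp only [Matrix.submatrix_apply, Matrix.of_apply, hRdef, hCdef, hsa, hsc]
                rw [show M - 1 - 1 + ((s : ℕ) + 1) + 1 = M + (s : ℕ) by omega]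
                rw [hEntry_shift hM]
                congr 1
                omega
              rw [hsub]
              have hbpos0 : 0 < b 0 := by rw [hbdef, bseq_zero hM]; exact ha1pos
              apply mul_pos hbpos0
              apply IHm 1 r' le_rfl (by omega) hr1'
              have hlink : (M - 1) * r' = (M - 1) * (r' - 1) + (M - 1) := by
                conv_lhs => rw [show r' = (r' - 1) + 1 by omega]
                rw [Nat.mul_add, Nat.mul_one]
              have hb' : (M - 1) * (r' + 1 - 1) + (M - (M - 1)) ≤ n := hb
              rw [show r' + 1 - 1 = r' by omega] at hb'
              omega
            · intro s _ hs
              rw [hcol s, if_neg (by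
                intro h0
                apply hs
                exact Fin.ext h0)]
              rw [mul_zero, zero_mul]
            · intro hmem
              exact absurd (Finset.mem_univ _) hmem
      · exact expand_nonneg hM hq IHtn hrow

end HW8



/-- If all the leading coefficients `h_0, ..., h_n` of the polynomials produced by the
generalized Euclidean algorithm with step `M` are positive, then all special minors
`Δ_p = H_M(k,r)`, `p = (M-1)(r-1)+(M-k) ∈ {1,...,n}`, are positive and `H_M(f)` is
totally nonnegative. -/
theorem pos_leading_coeffs_imp_special_minors_pos_and_TN
    (n M : ℕ) (a : ℕ → ℝ) (ha0 : a 0 ≠ 0) (hM : 2 ≤ M) (hMn : M ≤ n)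
    (hpos : ∀ i ≤ n, 0 < (gea a n M i).leadingCoeff) :
    (∀ k r : ℕ, 1 ≤ k → k ≤ M - 1 → 1 ≤ r →
      (M - 1) * (r - 1) + (M - k) ≤ n → 0 < specialMinor a n M k r) ∧
    IsTotallyNonneg (hEntry a n M) := by
  have h := HW8.key M hM n a (by omega) ha0 hpos
  exact h
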